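/- Let X be an n × p matrix (n ≥ p) whose rows Xᵢ are independent sub-Gaussian isotropic random vectors in ℝᵖ with ‖Xᵢ‖₂ = √p almost surely. Then for every α > 0, with probability at least 1 − 2 exp(−c_K α² p), one has s_min(Xᵀ) ≥ (1 − α)√p − C_K √n and s_max(Xᵀ) ≤ (1 + α)√p + C_K √n. -/

import Mathlib

open MeasureTheory ProbabilityTheory Matrix Metric
open scoped ENNReal

/-- The sub-Gaussian (ψ₂) norm of a real random variable. -/
noncomputable def psi2Norm {Ω : Type*} [MeasurableSpace Ω] (μ : Measure Ω) (Z : Ω → ℝ) : ℝ :=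
  ⨆ γ : {g : ℝ // 1 ≤ g}, (γ.1) ^ (-(1 : ℝ) / 2) * (∫ ω, |Z ω| ^ (γ.1) ∂μ) ^ ((γ.1)⁻¹)

/-- Euclidean norm of a finite real vector. -/
noncomputable def enorm {m : ℕ} (x : Fin m → ℝ) : ℝ := Real.sqrt (∑ i, (x i) ^ 2)

/-- Smallest singular value, as the infimum of `‖Ax‖₂` over unit vectors. -/
noncomputable def sMin {m k : ℕ} (A : Matrix (Fin m) (Fin k) ℝ) : ℝ :=
  ⨅ x : {x : Fin k → ℝ // _root_.enorm x = 1}, _root_.enorm (A.mulVec x.1)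

/-- Largest singular value, as the supremum of `‖Ax‖₂` over unit vectors. -/
noncomputable def sMax {m k : ℕ} (A : Matrix (Fin m) (Fin k) ℝ) : ℝ :=
  ⨆ x : {x : Fin k → ℝ // _root_.enorm x = 1}, _root_.enorm (A.mulVec x.1)




lemma aux_sep_card_le {p : ℕ} (hp : 0 < p) {M : Set (EuclideanSpace ℝ (Fin p))}
    (hM : M ⊆ sphere (0 : EuclideanSpace ℝ (Fin p)) 1)
    (hsep : M.Pairwise fun x y => (1:ℝ)/4 ≤ dist x y)
    (F : Finset (EuclideanSpace ℝ (Fin p))) (hF : ↑F ⊆ M) : F.card ≤ 16 ^ p := by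
  haveI : Nonempty (Fin p) := ⟨⟨0, hp⟩⟩
  set V : ENNReal := ENNReal.ofReal (Real.sqrt Real.pi ^ p / Real.Gamma (p / 2 + 1)) with hV
  have hvol : ∀ (x : EuclideanSpace ℝ (Fin p)) (r : ℝ),
      volume (ball x r) = (ENNReal.ofReal r) ^ p * V := by
    intro x r
    rw [EuclideanSpace.volume_ball]
    simp [hV]
  have hdisj : (↑F : Set (EuclideanSpace ℝ (Fin p))).PairwiseDisjoint
      (fun x => ball x (8⁻¹ : ℝ)) := by
    intro x hx y hy hxy
    exact ball_disjoint_ball (by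
      have := hsep (hF hx) (hF hy) hxy
      norm_num at this ⊢
      linarith)
  have hsub : (⋃ x ∈ F, ball x (8⁻¹ : ℝ)) ⊆ ball (0 : EuclideanSpace ℝ (Fin p)) 2 := by
    intro z hz
    simp only [Set.mem_iUnion, mem_ball] at hz ⊢
    obtain ⟨x, hx, hzx⟩ := hz
    calc dist z 0 ≤ dist z x + dist x 0 := dist_triangle _ _ _
      _ < 8⁻¹ + 1 := by
          have : dist x 0 = 1 := by
            have := hM (hF hx); simpa [mem_sphere_iff_norm, sub_zero, dist_eq_norm] using this
          linarith
      _ ≤ 2 := by norm_num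
  have hmeas : volume (⋃ x ∈ F, ball x (8⁻¹ : ℝ)) = ∑ x ∈ F, volume (ball x (8⁻¹ : ℝ)) :=
    measure_biUnion_finset hdisj (fun x _ => measurableSet_ball)
  have hle : (F.card : ℝ≥0∞) * ((ENNReal.ofReal (8⁻¹ : ℝ)) ^ p * V)
      ≤ (ENNReal.ofReal (2:ℝ)) ^ p * V := by
    calc (F.card : ℝ≥0∞) * ((ENNReal.ofReal (8⁻¹ : ℝ)) ^ p * V)
        = ∑ x ∈ F, volume (ball x (8⁻¹ : ℝ)) := by
          simp [hvol, Finset.sum_const, nsmul_eq_mul]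
      _ = volume (⋃ x ∈ F, ball x (8⁻¹ : ℝ)) := hmeas.symm
      _ ≤ volume (ball (0 : EuclideanSpace ℝ (Fin p)) 2) := measure_mono hsub
      _ = (ENNReal.ofReal (2:ℝ)) ^ p * V := hvol 0 2
  have hVpos : V ≠ 0 := by
    rw [hV]
    simp only [ne_eq, ENNReal.ofReal_eq_zero, not_le]
    positivity
  have hVtop : V ≠ ⊤ := ENNReal.ofReal_ne_top
  rw [← mul_assoc, ENNReal.mul_le_mul_iff_left hVpos hVtop] at hle
  have hle2 : ((F.card : ℝ)) * ((8⁻¹ : ℝ)) ^ p ≤ (2:ℝ) ^ p := by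
    have h8 : ((ENNReal.ofReal (8⁻¹ : ℝ)) ^ p) = ENNReal.ofReal ((8⁻¹:ℝ)^p) := by
      rw [ENNReal.ofReal_pow (by norm_num)]
    have h2 : ((ENNReal.ofReal (2 : ℝ)) ^ p) = ENNReal.ofReal ((2:ℝ)^p) := by
      rw [ENNReal.ofReal_pow (by norm_num)]
    rw [h8, h2] at hle
    have : ENNReal.ofReal ((F.card : ℝ) * (8⁻¹:ℝ)^p) ≤ ENNReal.ofReal ((2:ℝ)^p) := by
      rw [ENNReal.ofReal_mul (by positivity)]
      simpa using hle
    exact (ENNReal.ofReal_le_ofReal_iff (by positivity)).mp this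
  have : (F.card : ℝ) ≤ (16:ℝ) ^ p := by
    have h16 : (16:ℝ)^p = (2:ℝ)^p * (8:ℝ)^p := by
      rw [← mul_pow]; norm_num
    have h8p : (0:ℝ) < (8⁻¹:ℝ)^p := by positivity
    rw [h16]
    calc (F.card : ℝ) = (F.card : ℝ) * ((8⁻¹:ℝ)^p * (8:ℝ)^p) := by
          rw [← mul_pow]; norm_num
      _ = ((F.card : ℝ) * (8⁻¹:ℝ)^p) * (8:ℝ)^p := by ring
      _ ≤ (2:ℝ)^p * (8:ℝ)^p := by
          apply mul_le_mul_of_nonneg_right hle2 (by positivity)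
  have h16 : ((16:ℕ)^p : ℝ) = (16:ℝ)^p := by push_cast; ring
  exact_mod_cast this.trans_eq h16.symm

lemma exists_sphere_net (p : ℕ) (hp : 0 < p) :
    ∃ N : Finset (EuclideanSpace ℝ (Fin p)),
      N.card ≤ 16 ^ p ∧ (∀ x ∈ N, ‖x‖ = 1) ∧
      ∀ u : EuclideanSpace ℝ (Fin p), ‖u‖ = 1 → ∃ x ∈ N, ‖u - x‖ ≤ 1/4 := by
  classical
  set S : Set (Set (EuclideanSpace ℝ (Fin p))) :=
    {A | A ⊆ sphere (0 : EuclideanSpace ℝ (Fin p)) 1 ∧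
      A.Pairwise fun x y => (1:ℝ)/4 ≤ dist x y} with hS
  obtain ⟨M, hMmax⟩ := zorn_subset S (by
    intro c hcS hchain
    refine ⟨⋃₀ c, ⟨?_, ?_⟩, fun s hs => Set.subset_sUnion_of_mem hs⟩
    · intro x hx
      obtain ⟨A, hAc, hxA⟩ := hx
      exact (hcS hAc).1 hxA
    · intro x hx y hy hxy
      obtain ⟨A, hAc, hxA⟩ := hx
      obtain ⟨B, hBc, hyB⟩ := hy
      rcases hchain.total hAc hBc with h | h
      · exact (hcS hBc).2 (h hxA) hyB hxy
      · exact (hcS hAc).2 hxA (h hyB) hxy)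
  have hMS : M ∈ S := hMmax.prop
  have hMfin : M.Finite := by
    by_contra hinf
    obtain ⟨t, htM, htc⟩ := Set.Infinite.exists_subset_card_eq hinf (16 ^ p + 1)
    have := aux_sep_card_le hp hMS.1 hMS.2 t htM
    omega
  refine ⟨hMfin.toFinset, ?_, ?_, ?_⟩
  · exact aux_sep_card_le hp hMS.1 hMS.2 _ (by simp)
  · intro x hx
    have : x ∈ M := by simpa using hx
    simpa [mem_sphere_iff_norm] using hMS.1 this
  · intro u hu
    by_contra hcon
    push_neg at hcon
    have hfar : ∀ x ∈ M, (1:ℝ)/4 < dist u x := by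
      intro x hx
      have := hcon x (by simpa using hx)
      rw [dist_eq_norm]
      linarith
    have huM : u ∉ M := by
      intro h
      have := hfar u h
      simp at this
      linarith
    have hins : insert u M ∈ S := by
      constructor
      · intro x hx
        rcases hx with rfl | hx
        · simpa [mem_sphere_iff_norm] using hu
        · exact hMS.1 hx
      · apply Set.Pairwise.insert hMS.2
        intro x hx hxu
        constructor
        · exact le_of_lt (hfar x hx)
        · rw [dist_comm]; exact le_of_lt (hfar x hx)
    have := hMmax.2 hins (Set.subset_insert u M)
    exact huM (this (Set.mem_insert u M))








/-- The linear map sending `u` to the vector of inner products with the rows `a i`. -/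
noncomputable def rowMap {n p : ℕ} (a : Fin n → Fin p → ℝ) :
    EuclideanSpace ℝ (Fin p) →ₗ[ℝ] EuclideanSpace ℝ (Fin n) where
  toFun u := WithLp.toLp 2 (fun i => ∑ j, a i j * u j)
  map_add' u v := by
    ext i
    simp only [PiLp.add_apply, PiLp.toLp_apply]
    rw [← Finset.sum_add_distrib]
    congr 1; funext j; ring
  map_smul' c u := by
    ext i
    simp only [PiLp.smul_apply, PiLp.toLp_apply, RingHom.id_apply, smul_eq_mul, Finset.mul_sum]
    congr 1; funext j; ring

lemma rowMap_apply {n p : ℕ} (a : Fin n → Fin p → ℝ) (u : EuclideanSpace ℝ (Fin p)) (i : Fin n) :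
    rowMap a u i = ∑ j, a i j * u j := rfl

lemma norm_rowMap_eq {n p : ℕ} (a : Fin n → Fin p → ℝ) (u : EuclideanSpace ℝ (Fin p)) :
    ‖rowMap a u‖ = Real.sqrt (∑ i, (∑ j, a i j * u j) ^ 2) := by
  rw [EuclideanSpace.norm_eq]
  congr 1
  refine Finset.sum_congr rfl fun i _ => ?_
  rw [rowMap_apply, Real.norm_eq_abs, sq_abs]

/-- Bounding the full operator norm using a 1/4-net on the sphere. -/
lemma opNorm_le_of_net {n p : ℕ} (hp : 0 < p) (a : Fin n → Fin p → ℝ)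
    (N : Finset (EuclideanSpace ℝ (Fin p)))
    (hnet : ∀ u : EuclideanSpace ℝ (Fin p), ‖u‖ = 1 → ∃ x ∈ N, ‖u - x‖ ≤ 1/4)
    (T : ℝ) (hT : 0 ≤ T) (hA : ∀ x ∈ N, ‖rowMap a x‖ ≤ 3/4 * T) :
    ∀ u : EuclideanSpace ℝ (Fin p), ‖rowMap a u‖ ≤ T * ‖u‖ := by
  haveI : Nonempty (Fin p) := ⟨⟨0, hp⟩⟩
  haveI : Nontrivial (EuclideanSpace ℝ (Fin p)) := by
    refine nontrivial_of_ne (EuclideanSpace.single ⟨0, hp⟩ (1:ℝ)) 0 ?_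
    intro h
    have := congrArg (fun v => ‖v‖) h
    simp [EuclideanSpace.norm_single] at this
  have hL : Continuous fun u : EuclideanSpace ℝ (Fin p) => ‖rowMap a u‖ :=
    (LinearMap.continuous_of_finiteDimensional (rowMap a)).norm
  have hsph : (sphere (0 : EuclideanSpace ℝ (Fin p)) 1).Nonempty :=
    NormedSpace.sphere_nonempty.mpr zero_le_one
  obtain ⟨u₀, hu₀mem, hu₀max⟩ :=
    (isCompact_sphere (0 : EuclideanSpace ℝ (Fin p)) 1).exists_isMaxOn hsph hL.continuousOn
  set G : ℝ := ‖rowMap a u₀‖ with hG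
  have hGnn : 0 ≤ G := norm_nonneg _
  have step1 : ∀ v : EuclideanSpace ℝ (Fin p), ‖rowMap a v‖ ≤ G * ‖v‖ := by
    intro v
    rcases eq_or_ne v 0 with rfl | hv
    · simp
    · have hnv : ‖v‖ ≠ 0 := norm_ne_zero_iff.mpr hv
      set u : EuclideanSpace ℝ (Fin p) := ‖v‖⁻¹ • v with hu
      have huu : ‖u‖ = 1 := by
        rw [hu, norm_smul, norm_inv, norm_norm, inv_mul_cancel₀ hnv]
      have hvu : v = ‖v‖ • u := by
        rw [hu, smul_smul, mul_inv_cancel₀ hnv, one_smul]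
      have := hu₀max (by simpa [mem_sphere_iff_norm, sub_zero] using huu : u ∈ sphere _ 1)
      calc ‖rowMap a v‖ = ‖rowMap a (‖v‖ • u)‖ := by rw [← hvu]
        _ = ‖v‖ * ‖rowMap a u‖ := by rw [LinearMap.map_smul, norm_smul, Real.norm_eq_abs,
            abs_of_nonneg (norm_nonneg v)]
        _ ≤ ‖v‖ * G := by
            apply mul_le_mul_of_nonneg_left _ (norm_nonneg v)
            simpa using this
        _ = G * ‖v‖ := mul_comm _ _
  have hu₀ : ‖u₀‖ = 1 := by simpa [mem_sphere_iff_norm] using hu₀mem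
  obtain ⟨x, hxN, hx⟩ := hnet u₀ hu₀
  have hGT : G ≤ T := by
    have h1 : G ≤ ‖rowMap a x‖ + ‖rowMap a (u₀ - x)‖ := by
      have : rowMap a u₀ = rowMap a x + rowMap a (u₀ - x) := by
        rw [← map_add]; congr 1; abel
      rw [hG, this]
      exact norm_add_le _ _
    have h2 : ‖rowMap a (u₀ - x)‖ ≤ G * (1/4) := by
      calc ‖rowMap a (u₀ - x)‖ ≤ G * ‖u₀ - x‖ := step1 _
        _ ≤ G * (1/4) := mul_le_mul_of_nonneg_left hx hGnn
    have := hA x hxN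
    linarith
  intro u
  calc ‖rowMap a u‖ ≤ G * ‖u‖ := step1 u
    _ ≤ T * ‖u‖ := mul_le_mul_of_nonneg_right hGT (norm_nonneg u)

/-- From the operator bound on `rowMap` we get a bound on `sMax` of the transpose. -/
lemma sMax_le_of_opNorm {n p : ℕ} (hn : 0 < n) (a : Fin n → Fin p → ℝ) (T : ℝ) (hT : 0 ≤ T)
    (h : ∀ u : EuclideanSpace ℝ (Fin p), ‖rowMap a u‖ ≤ T * ‖u‖) :
    sMax (Matrix.of a)ᵀ ≤ T := by
  have hne : Nonempty {x : Fin n → ℝ // _root_.enorm x = 1} := by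
    refine ⟨⟨fun i => if i = ⟨0, hn⟩ then 1 else 0, ?_⟩⟩
    rw [_root_.enorm]
    rw [show (∑ i, ((if i = (⟨0, hn⟩ : Fin n) then (1:ℝ) else 0)) ^ 2) = 1 by
      rw [Finset.sum_eq_single (⟨0, hn⟩ : Fin n)] <;> simp +contextual]
    exact Real.sqrt_one
  apply ciSup_le
  rintro ⟨y, hy⟩
  dsimp only
  set W : Fin p → ℝ := (Matrix.of a)ᵀ.mulVec y with hW
  have hWj : ∀ j, W j = ∑ i, a i j * y i := by
    intro j
    rw [hW]
    simp [Matrix.mulVec, dotProduct, Matrix.transpose_apply, Matrix.of_apply]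
  have hWnorm : ‖WithLp.toLp 2 W‖ = _root_.enorm W := by
    rw [EuclideanSpace.norm_eq, _root_.enorm]
    congr 1
    exact Finset.sum_congr rfl fun j _ => by rw [Real.norm_eq_abs, sq_abs]
  have hnn : (0:ℝ) ≤ _root_.enorm W := Real.sqrt_nonneg _
  have key : (_root_.enorm W) ^ 2 ≤ T * _root_.enorm W := by
    have hsq : ∑ j, (W j) ^ 2 = ∑ i, y i * (rowMap a (WithLp.toLp 2 W) i) := by
      calc ∑ j, (W j) ^ 2 = ∑ j, (∑ i, a i j * y i) * W j := by
            refine Finset.sum_congr rfl fun j _ => ?_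
            rw [pow_two, hWj j]
        _ = ∑ j, ∑ i, y i * (a i j * W j) := by
            refine Finset.sum_congr rfl fun j _ => ?_
            rw [Finset.sum_mul]
            exact Finset.sum_congr rfl fun i _ => by ring
        _ = ∑ i, ∑ j, y i * (a i j * W j) := Finset.sum_comm
        _ = ∑ i, y i * (rowMap a (WithLp.toLp 2 W) i) := by
            refine Finset.sum_congr rfl fun i _ => ?_
            rw [rowMap_apply, Finset.mul_sum]
    have hCS : ∑ i, y i * (rowMap a (WithLp.toLp 2 W) i) ≤
        Real.sqrt (∑ i, (y i)^2) * Real.sqrt (∑ i, (rowMap a (WithLp.toLp 2 W) i)^2) :=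
      Real.sum_mul_le_sqrt_mul_sqrt _ _ _
    have hnormW : Real.sqrt (∑ i, (rowMap a (WithLp.toLp 2 W) i)^2) = ‖rowMap a (WithLp.toLp 2 W)‖ := by
      rw [EuclideanSpace.norm_eq]
      congr 1
      exact Finset.sum_congr rfl fun i _ => by rw [Real.norm_eq_abs, sq_abs]
    have h2 : (_root_.enorm W)^2 = ∑ j, (W j)^2 := Real.sq_sqrt (by positivity)
    calc (_root_.enorm W)^2 = ∑ j, (W j)^2 := h2
      _ = ∑ i, y i * (rowMap a (WithLp.toLp 2 W) i) := hsq
      _ ≤ Real.sqrt (∑ i, (y i)^2) * Real.sqrt (∑ i, (rowMap a (WithLp.toLp 2 W) i)^2) := hCS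
      _ = 1 * ‖rowMap a (WithLp.toLp 2 W)‖ := by
            rw [show Real.sqrt (∑ i, (y i)^2) = 1 from hy, hnormW]
      _ = ‖rowMap a (WithLp.toLp 2 W)‖ := one_mul _
      _ ≤ T * ‖WithLp.toLp 2 W‖ := h (WithLp.toLp 2 W)
      _ = T * _root_.enorm W := by rw [hWnorm]
  rcases eq_or_lt_of_le hnn with h0 | h0
  · rw [← h0]; exact hT
  · rw [pow_two] at key
    exact le_of_mul_le_mul_right (by linarith) h0

lemma sMin_nonneg {m k : ℕ} (A : Matrix (Fin m) (Fin k) ℝ) : 0 ≤ sMin A :=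
  Real.iInf_nonneg fun x => Real.sqrt_nonneg _




/-- `m^m ≤ e^m · m!`. -/
lemma pow_self_le_exp_pow_mul_factorial (m : ℕ) :
    (m : ℝ) ^ m ≤ Real.exp 1 ^ m * (m.factorial : ℝ) := by
  induction m with
  | zero => simp
  | succ m ih =>
    have he : (1:ℝ) ≤ Real.exp 1 := by
      have := Real.add_one_le_exp (1:ℝ); linarith
    rcases Nat.eq_zero_or_pos m with rfl | hm
    · simpa using he
    · have hm' : (0:ℝ) < m := by exact_mod_cast hm
      have key : ((m:ℝ)+1) ^ m ≤ Real.exp 1 * (m:ℝ) ^ m := by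
        have h2 : ((1 + 1/(m:ℝ))) ^ m ≤ Real.exp 1 := by
          have h3 := Real.add_one_le_exp (1/(m:ℝ))
          have hpow : ((1 + 1/(m:ℝ))) ^ m ≤ (Real.exp (1/(m:ℝ))) ^ m := by
            apply pow_le_pow_left₀ (by positivity) (by linarith)
          rw [← Real.exp_nat_mul] at hpow
          have hc : (m:ℝ) * (1/(m:ℝ)) = 1 := by field_simp
          rwa [hc] at hpow
        calc ((m:ℝ)+1) ^ m = ((1 + 1/(m:ℝ))) ^ m * (m:ℝ) ^ m := by
              rw [← mul_pow]; congr 1; field_simp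
          _ ≤ Real.exp 1 * (m:ℝ) ^ m := mul_le_mul_of_nonneg_right h2 (by positivity)
      have hfac : (Nat.factorial (m+1) : ℝ) = ((m:ℝ)+1) * (Nat.factorial m : ℝ) := by
        rw [Nat.factorial_succ]; push_cast; ring
      calc ((m+1:ℕ) : ℝ) ^ (m+1) = ((m:ℝ)+1) * ((m:ℝ)+1) ^ m := by push_cast; ring
        _ ≤ ((m:ℝ)+1) * (Real.exp 1 * (m:ℝ) ^ m) :=
            mul_le_mul_of_nonneg_left key (by positivity)
        _ ≤ ((m:ℝ)+1) * (Real.exp 1 * (Real.exp 1 ^ m * (Nat.factorial m : ℝ))) := by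
            apply mul_le_mul_of_nonneg_left _ (by positivity)
            exact mul_le_mul_of_nonneg_left ih (Real.exp_pos 1).le
        _ = Real.exp 1 ^ (m+1) * ((m+1:ℕ).factorial : ℝ) := by
            rw [hfac]; push_cast; ring

variable {Ω : Type*} [MeasurableSpace Ω] {μ : Measure Ω}

lemma abs_rpow_integrable [IsProbabilityMeasure μ] {Z : Ω → ℝ} (hZm : Measurable Z)
    {B : ℝ} (hZb : ∀ᵐ ω ∂μ, |Z ω| ≤ B) {γ : ℝ} (hγ : 0 ≤ γ) :
    Integrable (fun ω => |Z ω| ^ γ) μ := by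
  refine Integrable.mono' (integrable_const (B ^ γ))
    ((Real.continuous_rpow_const hγ).measurable.comp hZm.abs).aestronglyMeasurable ?_
  filter_upwards [hZb] with ω hω
  rw [Real.norm_eq_abs, abs_of_nonneg (Real.rpow_nonneg (abs_nonneg _) _)]
  exact Real.rpow_le_rpow (abs_nonneg _) hω hγ

/-- Moment bounds from the ψ₂-norm bound. -/
lemma moment_bound [IsProbabilityMeasure μ] {Z : Ω → ℝ} (hZm : Measurable Z)
    {B : ℝ} (hB : 0 ≤ B) (hZb : ∀ᵐ ω ∂μ, |Z ω| ≤ B)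
    {K : ℝ} (hK : 0 < K) (hpsi : psi2Norm μ Z ≤ K) (m : ℕ) :
    ∫ ω, (Z ω ^ 2) ^ m ∂μ ≤ K ^ (2*m) * (2*(m:ℝ)) ^ m := by
  rcases Nat.eq_zero_or_pos m with rfl | hm
  · simp
  have hbdd : BddAbove (Set.range fun γ : {g : ℝ // 1 ≤ g} =>
      (γ.1) ^ (-(1 : ℝ) / 2) * (∫ ω, |Z ω| ^ (γ.1) ∂μ) ^ ((γ.1)⁻¹)) := by
    refine ⟨max B 1, ?_⟩
    rintro x ⟨⟨γ, hγ⟩, rfl⟩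
    simp only
    have hγ0 : (0:ℝ) < γ := lt_of_lt_of_le one_pos hγ
    have hint : ∫ ω, |Z ω| ^ γ ∂μ ≤ B ^ γ := by
      calc ∫ ω, |Z ω| ^ γ ∂μ ≤ ∫ _, B ^ γ ∂μ := by
            refine integral_mono_ae (abs_rpow_integrable hZm hZb hγ0.le) (integrable_const _) ?_
            filter_upwards [hZb] with ω hω
            exact Real.rpow_le_rpow (abs_nonneg _) hω hγ0.le
        _ = B ^ γ := by simp
    have hint0 : 0 ≤ ∫ ω, |Z ω| ^ γ ∂μ :=
      integral_nonneg fun ω => Real.rpow_nonneg (abs_nonneg _) _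
    have h1 : (∫ ω, |Z ω| ^ γ ∂μ) ^ (γ⁻¹) ≤ (B ^ γ) ^ (γ⁻¹) :=
      Real.rpow_le_rpow hint0 hint (by positivity)
    have h2 : (B ^ γ) ^ (γ⁻¹) = B := by
      rw [← Real.rpow_mul hB, mul_inv_cancel₀ hγ0.ne', Real.rpow_one]
    have h3 : γ ^ (-(1:ℝ)/2) ≤ 1 :=
      Real.rpow_le_one_of_one_le_of_nonpos hγ (by norm_num)
    have h4 : (0:ℝ) ≤ (∫ ω, |Z ω| ^ γ ∂μ) ^ (γ⁻¹) := Real.rpow_nonneg hint0 _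
    calc γ ^ (-(1:ℝ)/2) * (∫ ω, |Z ω| ^ γ ∂μ) ^ (γ⁻¹)
        ≤ 1 * (max B 1) := by
          apply mul_le_mul h3 ((h1.trans_eq h2).trans (le_max_left _ _)) h4 one_pos.le
      _ = max B 1 := one_mul _
  -- apply the sup bound at γ = 2m
  have h2m : (1:ℝ) ≤ ((2*m : ℕ) : ℝ) := by
    have : (1:ℕ) ≤ 2*m := by omega
    exact_mod_cast this
  have hsup := le_ciSup hbdd ⟨((2*m : ℕ) : ℝ), h2m⟩
  have hKle : (((2*m : ℕ):ℝ)) ^ (-(1:ℝ)/2) *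
      (∫ ω, |Z ω| ^ (((2*m : ℕ):ℝ)) ∂μ) ^ ((((2*m : ℕ):ℝ))⁻¹) ≤ K :=
    le_trans hsup hpsi
  set I : ℝ := ∫ ω, |Z ω| ^ (((2*m : ℕ):ℝ)) ∂μ with hI
  have hI0 : 0 ≤ I := integral_nonneg fun ω => Real.rpow_nonneg (abs_nonneg _) _
  have hγpos : (0:ℝ) < ((2*m:ℕ):ℝ) := lt_of_lt_of_le one_pos h2m
  set b : ℝ := (((2*m : ℕ):ℝ)) ^ ((1:ℝ)/2) with hb
  have hbpos : 0 < b := Real.rpow_pos_of_pos hγpos _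
  have hneg : (((2*m : ℕ):ℝ)) ^ (-(1:ℝ)/2) = b⁻¹ := by
    rw [hb, ← Real.rpow_neg hγpos.le]
    norm_num
  have hA : I ^ ((((2*m : ℕ):ℝ))⁻¹) ≤ K * b := by
    rw [hneg] at hKle
    have := mul_le_mul_of_nonneg_left hKle hbpos.le
    rw [← mul_assoc, mul_inv_cancel₀ hbpos.ne', one_mul] at this
    linarith [this]
  have hIle : I ≤ (K * b) ^ (2*m) := by
    have hrw : (I ^ ((((2*m : ℕ):ℝ))⁻¹)) ^ (2*m) = I :=
      Real.rpow_inv_natCast_pow hI0 (by omega)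
    rw [← hrw]
    exact pow_le_pow_left₀ (Real.rpow_nonneg hI0 _) hA _
  have hbpow : b ^ (2*m) = (2*(m:ℝ)) ^ m := by
    rw [hb, ← Real.rpow_natCast ((((2*m : ℕ):ℝ)) ^ ((1:ℝ)/2)) (2*m),
      ← Real.rpow_mul hγpos.le]
    have : (1:ℝ)/2 * ((2*m : ℕ):ℝ) = (m:ℕ) := by push_cast; ring
    rw [this, Real.rpow_natCast]
    congr 1
    push_cast; ring
  have hIeq : ∫ ω, (Z ω ^ 2) ^ m ∂μ = I := by
    rw [hI]
    refine integral_congr_ae (Filter.Eventually.of_forall fun ω => ?_)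
    show (Z ω ^ 2) ^ m = |Z ω| ^ (((2*m : ℕ):ℝ))
    rw [Real.rpow_natCast, pow_mul, sq_abs]
  rw [hIeq]
  calc I ≤ (K * b) ^ (2*m) := hIle
    _ = K ^ (2*m) * (2*(m:ℝ)) ^ m := by rw [mul_pow, hbpow]

/-- MGF bound from moment bounds. -/
lemma mgf_bound [IsProbabilityMeasure μ] {Z : Ω → ℝ} (hZm : Measurable Z)
    {B K l : ℝ} (hZb : ∀ᵐ ω ∂μ, |Z ω| ≤ B) (hK : 0 < K)
    (hl : 0 ≤ l) (hlK : 2 * Real.exp 1 * K ^ 2 * l ≤ 2⁻¹)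
    (hmom : ∀ m : ℕ, ∫ ω, (Z ω ^ 2) ^ m ∂μ ≤ K ^ (2*m) * (2*(m:ℝ)) ^ m) :
    ∫⁻ ω, ENNReal.ofReal (Real.exp (l * Z ω ^ 2)) ∂μ ≤ 2 := by
  have hgm : ∀ m : ℕ, Measurable fun ω => l ^ m / (m.factorial : ℝ) * (Z ω ^ 2) ^ m :=
    fun m => measurable_const.mul ((hZm.pow_const 2).pow_const m)
  have hpt : ∀ ω, ENNReal.ofReal (Real.exp (l * Z ω ^ 2)) =
      ∑' m : ℕ, ENNReal.ofReal (l ^ m / (m.factorial : ℝ) * (Z ω ^ 2) ^ m) := by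
    intro ω
    have hexp : Real.exp (l * Z ω ^ 2) = ∑' m : ℕ, (l * Z ω ^ 2) ^ m / (m.factorial : ℝ) := by
      rw [Real.exp_eq_exp_ℝ, NormedSpace.exp_eq_tsum_div]
    rw [hexp, ENNReal.ofReal_tsum_of_nonneg]
    · congr 1
      funext m
      congr 1
      rw [mul_pow]; ring
    · intro m
      positivity
    · exact Real.summable_pow_div_factorial _
  rw [lintegral_congr hpt, lintegral_tsum fun m => ((hgm m).ennreal_ofReal).aemeasurable]
  have hterm : ∀ m : ℕ, (∫⁻ ω, ENNReal.ofReal (l ^ m / (m.factorial : ℝ) * (Z ω ^ 2) ^ m) ∂μ)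
      ≤ (2⁻¹ : ℝ≥0∞) ^ m := by
    intro m
    have hc : (0:ℝ) ≤ l ^ m / (m.factorial : ℝ) := by positivity
    have hint : Integrable (fun ω => (Z ω ^ 2) ^ m) μ := by
      refine Integrable.mono' (integrable_const ((B ^ 2) ^ m))
        ((hZm.pow_const 2).pow_const m).aestronglyMeasurable ?_
      filter_upwards [hZb] with ω hω
      rw [Real.norm_eq_abs, abs_of_nonneg (by positivity)]
      apply pow_le_pow_left₀ (by positivity)
      calc Z ω ^ 2 = |Z ω| ^ 2 := (sq_abs _).symm
        _ ≤ B ^ 2 := by apply pow_le_pow_left₀ (abs_nonneg _) hω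
    have hnn : 0 ≤ᵐ[μ] fun ω => (Z ω ^ 2) ^ m :=
      Filter.Eventually.of_forall fun ω => by positivity
    calc ∫⁻ ω, ENNReal.ofReal (l ^ m / (m.factorial : ℝ) * (Z ω ^ 2) ^ m) ∂μ
        = ENNReal.ofReal (l ^ m / (m.factorial : ℝ)) * ∫⁻ ω, ENNReal.ofReal ((Z ω ^ 2) ^ m) ∂μ := by
          simp_rw [ENNReal.ofReal_mul hc]
          rw [lintegral_const_mul _ ((hZm.pow_const 2).pow_const m).ennreal_ofReal]
      _ = ENNReal.ofReal (l ^ m / (m.factorial : ℝ)) * ENNReal.ofReal (∫ ω, (Z ω ^ 2) ^ m ∂μ) := by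
          rw [ofReal_integral_eq_lintegral_ofReal hint hnn]
      _ = ENNReal.ofReal (l ^ m / (m.factorial : ℝ) * ∫ ω, (Z ω ^ 2) ^ m ∂μ) := by
          rw [← ENNReal.ofReal_mul hc]
      _ ≤ ENNReal.ofReal ((2⁻¹:ℝ) ^ m) := by
          apply ENNReal.ofReal_le_ofReal
          have hmm : (2*(m:ℝ)) ^ m ≤ 2 ^ m * (Real.exp 1 ^ m * (m.factorial : ℝ)) := by
            rw [mul_pow]
            exact mul_le_mul_of_nonneg_left (pow_self_le_exp_pow_mul_factorial m) (by positivity)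
          have hfacpos : (0:ℝ) < (m.factorial : ℝ) := by
            exact_mod_cast Nat.factorial_pos m
          calc l ^ m / (m.factorial : ℝ) * ∫ ω, (Z ω ^ 2) ^ m ∂μ
              ≤ l ^ m / (m.factorial : ℝ) * (K ^ (2*m) * (2*(m:ℝ)) ^ m) := by
                apply mul_le_mul_of_nonneg_left (hmom m) (by positivity)
            _ ≤ l ^ m / (m.factorial : ℝ) *
                (K ^ (2*m) * (2 ^ m * (Real.exp 1 ^ m * (m.factorial : ℝ)))) := by
                apply mul_le_mul_of_nonneg_left _ (by positivity)
                exact mul_le_mul_of_nonneg_left hmm (by positivity)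
            _ = (2 * Real.exp 1 * K ^ 2 * l) ^ m := by
                have hh : (2 * Real.exp 1 * K ^ 2 * l) ^ m
                    = 2 ^ m * Real.exp 1 ^ m * K ^ (2*m) * l ^ m := by
                  rw [mul_pow, mul_pow, mul_pow, ← pow_mul]
                rw [hh]
                field_simp
            _ ≤ (2⁻¹:ℝ) ^ m := by
                apply pow_le_pow_left₀ _ hlK
                positivity
      _ = (2⁻¹ : ℝ≥0∞) ^ m := by
          rw [ENNReal.ofReal_pow (by norm_num)]
          congr 1
          rw [ENNReal.ofReal_inv_of_pos (by norm_num)]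
          norm_num
  calc (∑' m : ℕ, ∫⁻ ω, ENNReal.ofReal (l ^ m / (m.factorial : ℝ) * (Z ω ^ 2) ^ m) ∂μ)
      ≤ ∑' m : ℕ, (2⁻¹ : ℝ≥0∞) ^ m := ENNReal.tsum_le_tsum hterm
    _ = 2 := by
        rw [ENNReal.tsum_geometric, ENNReal.one_sub_inv_two, inv_inv]

/-- Expectation of a product of independent `ℝ≥0∞`-valued random variables. -/
lemma lintegral_prod_of_iIndep [IsProbabilityMeasure μ] {ι : Type*} {f : ι → Ω → ℝ≥0∞}
    (hm : ∀ i, Measurable (f i)) (hind : iIndepFun f μ)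
    (s : Finset ι) : ∫⁻ ω, ∏ i ∈ s, f i ω ∂μ = ∏ i ∈ s, ∫⁻ ω, f i ω ∂μ := by
  classical
  induction s using Finset.induction with
  | empty => simp
  | @insert a s ha ih =>
    have hF : Measurable fun ω => ∏ i ∈ s, f i ω := Finset.measurable_prod s fun i _ => hm i
    have hFeq : (∏ i ∈ s, f i) = fun ω => ∏ i ∈ s, f i ω := by
      funext ω; rw [Finset.prod_apply]
    have hIF : IndepFun (f a) (fun ω => ∏ i ∈ s, f i ω) μ := by
      have h := (hind.indepFun_finsetProd_of_notMem hm ha).symm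
      rwa [hFeq] at h
    have hmul := lintegral_mul_eq_lintegral_mul_lintegral_of_indepFun''
      (hm a).aemeasurable hF.aemeasurable hIF
    simp_rw [Finset.prod_insert ha]
    rw [← ih]
    exact hmul

/-- Chernoff bound. -/
lemma chernoff_bound [IsProbabilityMeasure μ] {n : ℕ} {Z : Fin n → Ω → ℝ}
    (hZm : ∀ i, Measurable (Z i)) {l : ℝ} (hl : 0 ≤ l)
    (hind : iIndepFun
      (fun i ω => ENNReal.ofReal (Real.exp (l * Z i ω ^ 2))) μ)
    (hmgf : ∀ i, ∫⁻ ω, ENNReal.ofReal (Real.exp (l * Z i ω ^ 2)) ∂μ ≤ 2) (s : ℝ) :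
    μ {ω | s < ∑ i, Z i ω ^ 2} ≤ ENNReal.ofReal (Real.exp (- (l * s))) * 2 ^ n := by
  set f : Fin n → Ω → ℝ≥0∞ := fun i ω => ENNReal.ofReal (Real.exp (l * Z i ω ^ 2)) with hf
  have hfm : ∀ i, Measurable (f i) := fun i =>
    ((measurable_const.mul ((hZm i).pow_const 2)).exp).ennreal_ofReal
  have hset : MeasurableSet {ω | s < ∑ i, Z i ω ^ 2} := by
    apply measurableSet_lt measurable_const
    exact Finset.measurable_sum _ fun i _ => (hZm i).pow_const 2
  have hmono : μ {ω | s < ∑ i, Z i ω ^ 2}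
      ≤ ∫⁻ ω, ENNReal.ofReal (Real.exp (- (l * s))) * ∏ i, f i ω ∂μ := by
    rw [← lintegral_indicator_one hset]
    apply lintegral_mono
    intro ω
    beta_reduce
    by_cases hω : ω ∈ {ω | s < ∑ i, Z i ω ^ 2}
    · rw [Set.indicator_of_mem hω]
      have hsum : s < ∑ i, Z i ω ^ 2 := hω
      have hexp : (1:ℝ) ≤ Real.exp (- (l * s)) * Real.exp (l * ∑ i, Z i ω ^ 2) := by
        rw [← Real.exp_add]
        have : 0 ≤ - (l * s) + l * ∑ i, Z i ω ^ 2 := by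
          have := mul_le_mul_of_nonneg_left hsum.le hl
          nlinarith
        calc (1:ℝ) = Real.exp 0 := (Real.exp_zero).symm
          _ ≤ _ := Real.exp_le_exp.mpr this
      have hprodf : ∏ i, f i ω = ENNReal.ofReal (Real.exp (l * ∑ i, Z i ω ^ 2)) := by
        rw [hf]
        simp only
        rw [← ENNReal.ofReal_prod_of_nonneg (fun i _ => (Real.exp_pos _).le)]
        congr 1
        rw [← Real.exp_sum]
        congr 1
        rw [Finset.mul_sum]
      rw [hprodf, ← ENNReal.ofReal_mul (Real.exp_pos _).le]
      have h1 : (1:ℝ≥0∞) = ENNReal.ofReal 1 := by simp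
      rw [Pi.one_apply, h1]
      exact ENNReal.ofReal_le_ofReal hexp
    · rw [Set.indicator_of_notMem hω]
      exact zero_le
  calc μ {ω | s < ∑ i, Z i ω ^ 2}
      ≤ ∫⁻ ω, ENNReal.ofReal (Real.exp (- (l * s))) * ∏ i, f i ω ∂μ := hmono
    _ = ENNReal.ofReal (Real.exp (- (l * s))) * ∫⁻ ω, ∏ i, f i ω ∂μ := by
        rw [lintegral_const_mul _ (Finset.measurable_prod _ fun i _ => hfm i)]
    _ = ENNReal.ofReal (Real.exp (- (l * s))) * ∏ i, ∫⁻ ω, f i ω ∂μ := by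
        rw [lintegral_prod_of_iIndep hfm hind Finset.univ]
    _ ≤ ENNReal.ofReal (Real.exp (- (l * s))) * 2 ^ n := by
        apply mul_le_mul_right
        calc ∏ i, ∫⁻ ω, f i ω ∂μ ≤ ∏ _i : Fin n, (2:ℝ≥0∞) :=
              Finset.prod_le_prod' fun i _ => hmgf i
          _ = 2 ^ n := by rw [Finset.prod_const, Finset.card_univ, Fintype.card_fin]


set_option maxHeartbeats 1000000 in
/-- Vershynin's bound for matrices with independent sub-Gaussian isotropic rows of norm
`√p`: with probability at least `1 − 2 exp(−c_K α² p)`, `s_min(Xᵀ) ≥ (1−α)√p − C_K √n` and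
`s_max(Xᵀ) ≤ (1+α)√p + C_K √n`. -/
theorem singular_values_subgaussian_columns (K : ℝ) (hK : 0 < K) :
    ∃ c C : ℝ, 0 < c ∧ 0 < C ∧
      ∀ (Ω : Type) [MeasurableSpace Ω] (μ : Measure Ω), IsProbabilityMeasure μ →
        ∀ (n p : ℕ), p ≤ n →
          ∀ (R : Fin n → Ω → Fin p → ℝ),
          (∀ i, Measurable (R i)) →
          iIndepFun R μ →
          (∀ i j k, ∫ ω, R i ω j * R i ω k ∂μ = if j = k then 1 else 0) →
          (∀ i, ∀ᵐ ω ∂μ, _root_.enorm (R i ω) = Real.sqrt p) →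
          (∀ i (u : Fin p → ℝ), (∑ j, (u j) ^ 2) = 1 →
            psi2Norm μ (fun ω => ∑ j, R i ω j * u j) ≤ K) →
          ∀ α : ℝ, 0 < α →
            ENNReal.ofReal (1 - 2 * Real.exp (-c * α ^ 2 * p)) ≤
              μ {ω | (1 - α) * Real.sqrt p - C * Real.sqrt n ≤
                    sMin (Matrix.of fun i j => R i ω j)ᵀ ∧
                  sMax (Matrix.of fun i j => R i ω j)ᵀ ≤
                    (1 + α) * Real.sqrt p + C * Real.sqrt n} := by
  have hepos : (0:ℝ) < Real.exp 1 := Real.exp_pos 1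
  set l : ℝ := (4 * Real.exp 1 * K ^ 2)⁻¹ with hldef
  have hlpos : 0 < l := by positivity
  set c : ℝ := l / 2 with hcdef
  set C : ℝ := 1 + Real.sqrt (8 / l) with hCdef
  have hC1 : 1 ≤ C := by
    have := Real.sqrt_nonneg (8 / l); rw [hCdef]; linarith
  have hC2 : 8 / l ≤ C ^ 2 := by
    have hs := Real.sq_sqrt (by positivity : (0:ℝ) ≤ 8 / l)
    have h0 := Real.sqrt_nonneg (8 / l)
    rw [hCdef]; nlinarith
  refine ⟨c, C, by positivity, by linarith, ?_⟩
  intro Ω _ μ hμ n p hpn R hRm hRind _hiso hnorm hpsi α hα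
  haveI := hμ
  rcases Nat.eq_zero_or_pos p with rfl | hp
  · -- trivial case `p = 0`
    have : (1:ℝ) - 2 * Real.exp (-c * α ^ 2 * (0:ℕ)) ≤ 0 := by
      simp only [Nat.cast_zero, mul_zero, Real.exp_zero]
      linarith
    rw [ENNReal.ofReal_eq_zero.mpr this]
    exact zero_le
  have hn : 0 < n := lt_of_lt_of_le hp hpn
  -- the deviation threshold
  set T : ℝ := (1 + α) * Real.sqrt p + C * Real.sqrt n with hTdef
  have hsp : (0:ℝ) ≤ Real.sqrt p := Real.sqrt_nonneg _
  have hsn : (0:ℝ) ≤ Real.sqrt n := Real.sqrt_nonneg _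
  have hT0 : 0 ≤ T := by rw [hTdef]; nlinarith
  set s : ℝ := (3/4 * T) ^ 2 with hsdef
  -- the net
  obtain ⟨N, hNcard, hNsphere, hNnet⟩ := exists_sphere_net p hp
  -- measurability of the elementary random variables
  have hZm : ∀ (i : Fin n) (x : EuclideanSpace ℝ (Fin p)),
      Measurable fun ω => ∑ j, R i ω j * x j := by
    intro i x
    exact Finset.measurable_sum _ fun j _ =>
      ((measurable_pi_apply j).comp (hRm i)).mul_const (x j)
  -- the bad events
  have hbadm : ∀ x : EuclideanSpace ℝ (Fin p),
      MeasurableSet {ω | s < ∑ i, (∑ j, R i ω j * x j) ^ 2} := by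
    intro x
    apply measurableSet_lt measurable_const
    exact Finset.measurable_sum _ fun i _ => ((hZm i x).pow_const 2)
  -- per-point tail bound
  have hpoint : ∀ x ∈ N,
      μ {ω | s < ∑ i, (∑ j, R i ω j * x j) ^ 2}
        ≤ ENNReal.ofReal (Real.exp (- (l * s))) * 2 ^ n := by
    intro x hxN
    have hx1 : ∑ j, (x j) ^ 2 = 1 := by
      have h := hNsphere x hxN
      rw [EuclideanSpace.norm_eq] at h
      have h2 : Real.sqrt (∑ j, (x j)^2) = 1 := by
        rw [show (∑ j, (x j)^2) = ∑ j, ‖x j‖^2 from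
          Finset.sum_congr rfl fun j _ => by rw [Real.norm_eq_abs, sq_abs]]
        exact h
      exact Real.sqrt_eq_one.mp h2
    -- a.s. bound on |Z i|
    have hZb : ∀ i : Fin n, ∀ᵐ ω ∂μ, |∑ j, R i ω j * x j| ≤ Real.sqrt p := by
      intro i
      filter_upwards [hnorm i] with ω hω
      have hcs : (∑ j, R i ω j * x j) ^ 2 ≤ (∑ j, R i ω j ^ 2) * ∑ j, (x j) ^ 2 :=
        Finset.sum_mul_sq_le_sq_mul_sq _ _ _
      have habs : |∑ j, R i ω j * x j| = Real.sqrt ((∑ j, R i ω j * x j) ^ 2) :=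
        (Real.sqrt_sq_eq_abs _).symm
      rw [habs]
      calc Real.sqrt ((∑ j, R i ω j * x j) ^ 2)
          ≤ Real.sqrt ((∑ j, R i ω j ^ 2) * ∑ j, (x j) ^ 2) := Real.sqrt_le_sqrt hcs
        _ = Real.sqrt (∑ j, R i ω j ^ 2) := by rw [hx1, mul_one]
        _ = Real.sqrt p := hω
    have hmom : ∀ i : Fin n, ∀ m : ℕ,
        ∫ ω, ((∑ j, R i ω j * x j) ^ 2) ^ m ∂μ ≤ K ^ (2*m) * (2*(m:ℝ)) ^ m := by
      intro i m
      exact moment_bound (hZm i x) (Real.sqrt_nonneg _) (hZb i) hK (hpsi i x hx1) m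
    have hlK : 2 * Real.exp 1 * K ^ 2 * l ≤ 2⁻¹ := by
      rw [hldef]
      have heq : 2 * Real.exp 1 * K ^ 2 * (4 * Real.exp 1 * K ^ 2)⁻¹ = 2⁻¹ := by
        rw [mul_inv_eq_iff_eq_mul₀ (by positivity : (4:ℝ) * Real.exp 1 * K ^ 2 ≠ 0)]
        ring
      exact le_of_eq heq
    have hmgf : ∀ i : Fin n,
        ∫⁻ ω, ENNReal.ofReal (Real.exp (l * (∑ j, R i ω j * x j) ^ 2)) ∂μ ≤ 2 := by
      intro i
      exact mgf_bound (hZm i x) (hZb i) hK hlpos.le hlK (hmom i)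
    have hind : iIndepFun
        (fun i ω => ENNReal.ofReal (Real.exp (l * (∑ j, R i ω j * x j) ^ 2))) μ := by
      have hg : ∀ i : Fin n, Measurable fun v : Fin p → ℝ =>
          ENNReal.ofReal (Real.exp (l * (∑ j, v j * x j) ^ 2)) := by
        intro i
        have hsum : Measurable fun v : Fin p → ℝ => ∑ j, v j * x j :=
          Finset.measurable_sum _ fun j _ => by fun_prop
        exact ((measurable_const.mul (hsum.pow_const 2)).exp).ennreal_ofReal
      exact hRind.comp _ hg
    exact chernoff_bound (fun i => hZm i x) hlpos.le hind hmgf s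
  -- union bound
  set Gc : Set Ω := ⋃ x ∈ N, {ω | s < ∑ i, (∑ j, R i ω j * x j) ^ 2} with hGcdef
  have hGcm : MeasurableSet Gc := by
    exact MeasurableSet.biUnion N.countable_toSet fun x _ => hbadm x
  have hGc : μ Gc ≤ ENNReal.ofReal (2 * Real.exp (-c * α ^ 2 * p)) := by
    have h1 : μ Gc ≤ ∑ x ∈ N, μ {ω | s < ∑ i, (∑ j, R i ω j * x j) ^ 2} :=
      measure_biUnion_finset_le N _
    have h2 : ∑ x ∈ N, μ {ω | s < ∑ i, (∑ j, R i ω j * x j) ^ 2}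
        ≤ (N.card : ℝ≥0∞) * (ENNReal.ofReal (Real.exp (- (l * s))) * 2 ^ n) := by
      rw [← nsmul_eq_mul]
      exact Finset.sum_le_card_nsmul N _ _ hpoint
    have h3 : (N.card : ℝ≥0∞) * (ENNReal.ofReal (Real.exp (- (l * s))) * 2 ^ n)
        ≤ ENNReal.ofReal ((16:ℝ) ^ p * (Real.exp (- (l * s)) * 2 ^ n)) := by
      rw [ENNReal.ofReal_mul (by positivity), ENNReal.ofReal_mul (Real.exp_pos _).le]
      have hcard : (N.card : ℝ≥0∞) ≤ ENNReal.ofReal ((16:ℝ) ^ p) := by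
        have : ((N.card : ℕ) : ℝ≥0∞) ≤ ((16 ^ p : ℕ) : ℝ≥0∞) := by
          exact_mod_cast hNcard
        refine this.trans_eq ?_
        rw [← ENNReal.ofReal_natCast]
        congr 1
        push_cast
        ring
      have h2n : (2:ℝ≥0∞) ^ n = ENNReal.ofReal ((2:ℝ) ^ n) := by
        rw [ENNReal.ofReal_pow (by norm_num)]
        norm_num
      rw [h2n]
      exact mul_le_mul' hcard le_rfl
    -- the real-number inequality
    have hreal : (16:ℝ) ^ p * (Real.exp (- (l * s)) * 2 ^ n)
        ≤ 2 * Real.exp (-c * α ^ 2 * p) := by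
      clear_value l c C T s
      have hpn' : (p:ℝ) ≤ (n:ℝ) := by exact_mod_cast hpn
      have hp0 : (0:ℝ) ≤ (p:ℝ) := Nat.cast_nonneg p
      have hn0 : (0:ℝ) ≤ (n:ℝ) := Nat.cast_nonneg n
      have hsqp : Real.sqrt p ^ 2 = (p:ℝ) := Real.sq_sqrt hp0
      have hsqn : Real.sqrt n ^ 2 = (n:ℝ) := Real.sq_sqrt hn0
      -- s is large
      have hs1 : (9/16) * (α^2 * p + C^2 * n) ≤ s := by
        have h1α : (0:ℝ) ≤ 1 + α := by linarith
        have hC0 : (0:ℝ) ≤ C := by linarith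
        have hcross : 0 ≤ (1+α) * C * (Real.sqrt p * Real.sqrt n) :=
          mul_nonneg (mul_nonneg h1α hC0) (mul_nonneg hsp hsn)
        have hexp : s = (9/16) * ((1+α)^2 * (Real.sqrt p)^2
            + 2*((1+α) * C * (Real.sqrt p * Real.sqrt n)) + C^2 * (Real.sqrt n)^2) := by
          rw [hsdef, hTdef]; ring
        rw [hexp, hsqp, hsqn]
        have hsq1α : ((1:ℝ)+α)^2 * (p:ℝ) = (p:ℝ) + 2*(α*(p:ℝ)) + α^2*(p:ℝ) := by ring
        nlinarith [hcross, mul_nonneg hα.le hp0, hp0, hsq1α]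
      have hlC : 8 ≤ l * C ^ 2 := by
        have : l * (8 / l) ≤ l * C ^ 2 := mul_le_mul_of_nonneg_left hC2 hlpos.le
        rwa [mul_div_cancel₀ _ hlpos.ne'] at this
      have hls : 4 * n + c * α ^ 2 * p ≤ l * s := by
        have h4 : l * ((9/16) * (α^2 * p + C^2 * n)) ≤ l * s :=
          mul_le_mul_of_nonneg_left hs1 hlpos.le
        have hexpand : l * ((9/16) * (α^2 * p + C^2 * n))
            = (9/16) * l * α^2 * p + (9/16) * (l * C^2) * n := by ring
        rw [hexpand] at h4
        have hterm1 : c * α ^ 2 * p ≤ (9/16) * l * α^2 * p := by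
          rw [hcdef]
          have : (0:ℝ) ≤ α ^ 2 * p := by positivity
          nlinarith
        have hterm2 : 4 * (n:ℝ) ≤ (9/16) * (l * C^2) * n := by
          nlinarith [mul_le_mul_of_nonneg_right hlC hn0]
        linarith
      -- the entropy bound
      have hent : (16:ℝ) ^ p * 2 ^ n ≤ Real.exp (4 * n) := by
        have h16 : (16:ℝ) ^ p ≤ 16 ^ n := pow_le_pow_right₀ (by norm_num) hpn
        have h32 : (16:ℝ) ^ n * 2 ^ n = 32 ^ n := by
          rw [← mul_pow]; norm_num
        have he4 : (32:ℝ) ≤ Real.exp 4 := by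
          have h9 := Real.exp_one_gt_d9
          have h1 : (2.7:ℝ) ≤ Real.exp 1 := by linarith
          have h2 : (2.7:ℝ) ^ (4:ℕ) ≤ Real.exp 1 ^ (4:ℕ) :=
            pow_le_pow_left₀ (by norm_num) h1 4
          have h3 : Real.exp 1 ^ (4:ℕ) = Real.exp 4 := by
            rw [← Real.exp_nat_mul]; norm_num
          nlinarith
        calc (16:ℝ) ^ p * 2 ^ n ≤ 16 ^ n * 2 ^ n := by
              apply mul_le_mul_of_nonneg_right h16 (by positivity)
          _ = 32 ^ n := h32
          _ ≤ (Real.exp 4) ^ n := pow_le_pow_left₀ (by norm_num) he4 n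
          _ = Real.exp (4 * n) := by
              rw [← Real.exp_nat_mul]
              ring_nf
      calc (16:ℝ) ^ p * (Real.exp (- (l * s)) * 2 ^ n)
          = (16 ^ p * 2 ^ n) * Real.exp (- (l * s)) := by ring
        _ ≤ Real.exp (4 * n) * Real.exp (- (l * s)) := by
            apply mul_le_mul_of_nonneg_right hent (Real.exp_pos _).le
        _ = Real.exp (4 * n - l * s) := by rw [← Real.exp_add]; ring_nf
        _ ≤ Real.exp (-c * α ^ 2 * p) := by
            apply Real.exp_le_exp.mpr
            linarith
        _ ≤ 2 * Real.exp (-c * α ^ 2 * p) := by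
            nlinarith [Real.exp_pos (-c * α ^ 2 * (p:ℝ))]
    calc μ Gc ≤ ∑ x ∈ N, μ {ω | s < ∑ i, (∑ j, R i ω j * x j) ^ 2} := h1
      _ ≤ (N.card : ℝ≥0∞) * (ENNReal.ofReal (Real.exp (- (l * s))) * 2 ^ n) := h2
      _ ≤ ENNReal.ofReal ((16:ℝ) ^ p * (Real.exp (- (l * s)) * 2 ^ n)) := h3
      _ ≤ ENNReal.ofReal (2 * Real.exp (-c * α ^ 2 * p)) := ENNReal.ofReal_le_ofReal hreal
  -- the good event implies the conclusion
  have hsub : Gcᶜ ⊆ {ω | (1 - α) * Real.sqrt p - C * Real.sqrt n ≤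
        sMin (Matrix.of fun i j => R i ω j)ᵀ ∧
      sMax (Matrix.of fun i j => R i ω j)ᵀ ≤ (1 + α) * Real.sqrt p + C * Real.sqrt n} := by
    intro ω hω
    have hωx : ∀ x ∈ N, ∑ i, (∑ j, R i ω j * x j) ^ 2 ≤ s := by
      intro x hxN
      have : ω ∉ {ω | s < ∑ i, (∑ j, R i ω j * x j) ^ 2} := by
        intro hc
        exact hω (Set.mem_biUnion hxN hc)
      simpa using this
    constructor
    · -- sMin part
      have h1 : (1 - α) * Real.sqrt p ≤ Real.sqrt p := by nlinarith
      have h2 : Real.sqrt p ≤ Real.sqrt n := Real.sqrt_le_sqrt (by exact_mod_cast hpn)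
      have h3 : Real.sqrt n ≤ C * Real.sqrt n := by nlinarith
      have := sMin_nonneg (Matrix.of fun i j => R i ω j)ᵀ
      linarith
    · -- sMax part
      have hA : ∀ x ∈ N, ‖rowMap (fun i j => R i ω j) x‖ ≤ 3/4 * T := by
        intro x hxN
        rw [norm_rowMap_eq]
        calc Real.sqrt (∑ i, (∑ j, R i ω j * x j) ^ 2)
            ≤ Real.sqrt s := Real.sqrt_le_sqrt (hωx x hxN)
          _ = 3/4 * T := by
              rw [hsdef, Real.sqrt_sq (by linarith)]
      have hop := opNorm_le_of_net hp (fun i j => R i ω j) N hNnet T hT0 hA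
      exact sMax_le_of_opNorm hn (fun i j => R i ω j) T hT0 hop
  -- put everything together
  have hcompl : μ Gcᶜ = 1 - μ Gc := by
    rw [measure_compl hGcm (measure_ne_top μ Gc), measure_univ]
  calc ENNReal.ofReal (1 - 2 * Real.exp (-c * α ^ 2 * p))
      = 1 - ENNReal.ofReal (2 * Real.exp (-c * α ^ 2 * p)) := by
        rw [ENNReal.ofReal_sub _ (by positivity), ENNReal.ofReal_one]
    _ ≤ 1 - μ Gc := tsub_le_tsub_left hGc 1
    _ = μ Gcᶜ := hcompl.symm
    _ ≤ _ := measure_mono hsub
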